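/- For any infinite set X, the group FAlt(X) is simple: every normal subgroup of FAlt(X) is either trivial or equal to FAlt(X). -/

import Mathlib

open Equiv Equiv.Perm Subgroup Set

/-- `FAlt X`: the subgroup of `Equiv.Perm X` generated by all 3-cycles, i.e. by those
permutations whose support has exactly 3 elements. -/
def FAlt (X : Type*) : Subgroup (Equiv.Perm X) :=
  Subgroup.closure {σ : Equiv.Perm X | {x | σ x ≠ x}.ncard = 3}

section Aux

variable {X : Type*}

theorem FAlt.supp_finite {σ : Equiv.Perm X} (h : σ ∈ FAlt X) :
    {x | σ x ≠ x}.Finite := by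
  induction h using Subgroup.closure_induction with
  | mem x hx => exact Set.finite_of_ncard_ne_zero (by rw [hx]; norm_num)
  | one => simp only [Equiv.Perm.one_apply, ne_eq, not_true_eq_false,
      Set.setOf_false]; exact Set.finite_empty
  | mul x y hx hy ihx ihy =>
      refine (ihx.union ihy).subset fun w hw => ?_
      by_contra hcon
      simp only [Set.mem_union, Set.mem_setOf_eq, not_or, not_not] at hcon
      exact hw (by simp [Equiv.Perm.mul_apply, hcon.2, hcon.1])
  | inv x hx ihx =>
      refine ihx.subset fun w hw => ?_
      simp only [Set.mem_setOf_eq] at hw ⊢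
      intro hcon
      exact hw (by nth_rewrite 1 [← hcon]; simp)

theorem supp_ofSubtype {p : X → Prop} [DecidablePred p] (ε : Equiv.Perm (Subtype p)) :
    {x | Equiv.Perm.ofSubtype ε x ≠ x} = Subtype.val '' {y | ε y ≠ y} := by
  ext x
  constructor
  · intro hx
    by_cases hp : p x
    · refine ⟨⟨x, hp⟩, ?_, rfl⟩
      simp only [Set.mem_setOf_eq]
      intro hcon
      exact hx (by rw [Equiv.Perm.ofSubtype_apply_of_mem ε hp, hcon])
    · exact absurd (Equiv.Perm.ofSubtype_apply_of_not_mem ε hp) hx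
  · rintro ⟨y, hy, rfl⟩
    simp only [Set.mem_setOf_eq] at hy ⊢
    rw [Equiv.Perm.ofSubtype_apply_coe]
    exact fun hcon => hy (Subtype.val_injective hcon)

variable [DecidableEq X]

theorem ofSubtype_mem_FAlt (T : Finset X) (ε : Equiv.Perm {x // x ∈ T})
    (hε : ε ∈ alternatingGroup {x // x ∈ T}) :
    Equiv.Perm.ofSubtype ε ∈ FAlt X := by
  have hle : alternatingGroup {x // x ∈ T} ≤
      (FAlt X).comap (Equiv.Perm.ofSubtype (p := (· ∈ T))) := by
    rw [← Equiv.Perm.closure_three_cycles_eq_alternating]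
    rw [Subgroup.closure_le]
    intro f hf
    simp only [SetLike.mem_coe, Subgroup.mem_comap]
    apply Subgroup.subset_closure
    show {x | Equiv.Perm.ofSubtype f x ≠ x}.ncard = 3
    rw [supp_ofSubtype, Set.ncard_image_of_injective _ Subtype.val_injective]
    have : {y | f y ≠ y} = ↑f.support := by ext y; simp [Equiv.Perm.mem_support]
    rw [this, Set.ncard_coe_finset]
    exact hf.card_support
  exact hle hε

/-- The canonical hom from the alternating group of a finset into `FAlt X`. -/
def altToFAlt (T : Finset X) : alternatingGroup {x // x ∈ T} →* ↥(FAlt X) :=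
  MonoidHom.mk' (fun ε => ⟨Equiv.Perm.ofSubtype ε.1, ofSubtype_mem_FAlt T ε.1 ε.2⟩)
    (fun f g => Subtype.ext (by simp))

@[simp] theorem altToFAlt_coe (T : Finset X) (ε : alternatingGroup {x // x ∈ T}) :
    (altToFAlt T ε : Equiv.Perm X) = Equiv.Perm.ofSubtype ε.1 := rfl

/-- Restriction of a 3-cycle to a finset containing its support. -/
theorem exists_restrict_threeCycle (c : Equiv.Perm X) (hc : {x | c x ≠ x}.ncard = 3)
    (T : Finset X) (hsub : {x | c x ≠ x} ⊆ ↑T) :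
    ∃ ε : Equiv.Perm {x // x ∈ T}, ε.IsThreeCycle ∧ Equiv.Perm.ofSubtype ε = c := by
  have h₁ : ∀ x, x ∈ T ↔ c x ∈ T := by
    intro x
    constructor
    · intro hx
      by_cases hcx : c x = x
      · rwa [hcx]
      · exact hsub (fun hcon => hcx (c.injective hcon))
    · intro hx
      by_contra hxT
      have : c x = x := by
        by_contra hne
        exact hxT (hsub hne)
      rw [this] at hx; exact hxT hx
  replace h₁ : ∀ x, c x ∈ T ↔ x ∈ T := fun x => (h₁ x).symm
  refine ⟨c.subtypePerm h₁, ?_, Equiv.Perm.ofSubtype_subtypePerm h₁ (fun x hx => hsub hx)⟩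
  rw [← card_support_eq_three_iff]
  have hset : Subtype.val '' {y : {x // x ∈ T} | c ↑y ≠ ↑y} = {x | c x ≠ x} := by
    ext x
    constructor
    · rintro ⟨y, hy, rfl⟩; exact hy
    · intro hx; exact ⟨⟨x, hsub hx⟩, hx, rfl⟩
  have hsupp : ({y | (c.subtypePerm h₁) y ≠ y} : Set {x // x ∈ T}) =
      {y : {x // x ∈ T} | c ↑y ≠ ↑y} := by
    ext y
    simp only [Set.mem_setOf_eq, Equiv.Perm.subtypePerm_apply, ne_eq]
    constructor
    · intro h hcon
      exact h (Subtype.ext hcon)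
    · intro h hcon
      exact h (congrArg Subtype.val hcon)
  have hco : ((c.subtypePerm h₁).support : Set {x // x ∈ T}) =
      {y | (c.subtypePerm h₁) y ≠ y} := by
    ext y; simp only [Finset.mem_coe, Equiv.Perm.mem_support, Set.mem_setOf_eq]
  calc (c.subtypePerm h₁).support.card
      = ((c.subtypePerm h₁).support : Set {x // x ∈ T}).ncard := (Set.ncard_coe_finset _).symm
    _ = ({y : {x // x ∈ T} | c ↑y ≠ ↑y}).ncard := by rw [hco, hsupp]
    _ = (Subtype.val '' {y : {x // x ∈ T} | c ↑y ≠ ↑y}).ncard :=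
        (Set.ncard_image_of_injective _ Subtype.val_injective).symm
    _ = 3 := by rw [hset, hc]

section c3
variable {x y z : X}

/-- The 3-cycle (x y z). -/
def c3 (x y z : X) : Equiv.Perm X := Equiv.swap x z * Equiv.swap x y

theorem c3_apply_x (hxy : x ≠ y) (hyz : y ≠ z) : c3 x y z x = y := by
  simp only [c3, Equiv.Perm.mul_apply, Equiv.swap_apply_left]
  exact Equiv.swap_apply_of_ne_of_ne (Ne.symm hxy) hyz

theorem c3_apply_y : c3 x y z y = z := by
  simp [c3, Equiv.Perm.mul_apply, Equiv.swap_apply_right, Equiv.swap_apply_left]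

theorem c3_apply_z (hxz : x ≠ z) (hyz : y ≠ z) : c3 x y z z = x := by
  simp [c3, Equiv.Perm.mul_apply,
    Equiv.swap_apply_of_ne_of_ne (Ne.symm hxz) (Ne.symm hyz), Equiv.swap_apply_right]

theorem c3_apply_other {w : X} (h1 : w ≠ x) (h2 : w ≠ y) (h3 : w ≠ z) : c3 x y z w = w := by
  simp [c3, Equiv.Perm.mul_apply, Equiv.swap_apply_of_ne_of_ne h1 h2,
    Equiv.swap_apply_of_ne_of_ne h1 h3]

theorem c3_supp (hxy : x ≠ y) (hxz : x ≠ z) (hyz : y ≠ z) :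
    {w | c3 x y z w ≠ w} = {x, y, z} := by
  ext w
  simp only [Set.mem_setOf_eq, Set.mem_insert_iff, Set.mem_singleton_iff]
  by_cases h1 : w = x
  · rw [h1]; simp [c3_apply_x hxy hyz, Ne.symm hxy]
  by_cases h2 : w = y
  · rw [h2]; simp [c3_apply_y (x := x) (z := z), Ne.symm hyz]
  by_cases h3 : w = z
  · rw [h3]; simp [c3_apply_z hxz hyz, hxz]
  · simp [c3_apply_other h1 h2 h3, h1, h2, h3]

theorem c3_ncard (hxy : x ≠ y) (hxz : x ≠ z) (hyz : y ≠ z) :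
    {w | c3 x y z w ≠ w}.ncard = 3 := by
  rw [c3_supp hxy hxz hyz]
  exact Set.ncard_eq_three.mpr ⟨x, y, z, hxy, hxz, hyz, rfl⟩

theorem c3_mem_FAlt (hxy : x ≠ y) (hxz : x ≠ z) (hyz : y ≠ z) : c3 x y z ∈ FAlt X :=
  Subgroup.subset_closure (c3_ncard hxy hxz hyz)

end c3

theorem alt_simple_of_card_five {β : Type*} [Fintype β] [DecidableEq β]
    (h : Fintype.card β = 5) : IsSimpleGroup (alternatingGroup β) := by
  have e : Fin 5 ≃ β := (Fintype.equivFinOfCardEq h).symm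
  have hsign : ∀ (f : Equiv.Perm (Fin 5)), Equiv.Perm.sign (e.permCongr f) = Equiv.Perm.sign f :=
    fun f => Equiv.Perm.sign_permCongr e f
  let Φ : alternatingGroup (Fin 5) →* alternatingGroup β :=
    MonoidHom.mk' (fun f => ⟨e.permCongr f.1, by
        rw [Equiv.Perm.mem_alternatingGroup, hsign]
        exact Equiv.Perm.mem_alternatingGroup.mp f.2⟩)
      (fun f g => Subtype.ext (by
        ext w
        simp [Equiv.permCongr_apply, Equiv.Perm.mul_apply]))
  haveI : Nontrivial (alternatingGroup β) :=
    alternatingGroup.nontrivial_of_three_le_card (by rw [Nat.card_eq_fintype_card]; omega)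
  refine IsSimpleGroup.isSimpleGroup_of_surjective Φ ?_
  rintro ⟨g, hg⟩
  refine ⟨⟨e.symm.permCongr g, ?_⟩, Subtype.ext ?_⟩
  · rw [Equiv.Perm.mem_alternatingGroup, Equiv.Perm.sign_permCongr]
    exact Equiv.Perm.mem_alternatingGroup.mp hg
  · show e.permCongr (e.symm.permCongr g) = g
    ext w
    simp [Equiv.permCongr_apply]

end Aux

/-- For any infinite set `X`, the group `FAlt X` is simple. -/
theorem fAlt_isSimpleGroup {X : Type*} [Infinite X] : IsSimpleGroup ↥(FAlt X) := by
  letI := Classical.decEq X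
  -- Nontrivial
  have x0 : X := Classical.arbitrary X
  obtain ⟨y0, hy0⟩ := Infinite.exists_notMem_finset ({x0} : Finset X)
  obtain ⟨z0, hz0⟩ := Infinite.exists_notMem_finset ({x0, y0} : Finset X)
  simp only [Finset.mem_singleton, Finset.mem_insert] at hy0 hz0
  push_neg at hz0
  have hx0y0 : x0 ≠ y0 := fun h => hy0 h.symm
  have hx0z0 : x0 ≠ z0 := fun h => hz0.1 h.symm
  have hy0z0 : y0 ≠ z0 := fun h => hz0.2 h.symm
  haveI : Nontrivial ↥(FAlt X) := by
    refine ⟨⟨c3 x0 y0 z0, c3_mem_FAlt hx0y0 hx0z0 hy0z0⟩, 1, fun h => ?_⟩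
    have := congrArg (fun u : ↥(FAlt X) => (u : Equiv.Perm X) x0) h
    simp only [Equiv.Perm.one_apply, OneMemClass.coe_one] at this
    rw [c3_apply_x hx0y0 hy0z0] at this
    exact hx0y0 this.symm
  refine { eq_bot_or_eq_top_of_normal := ?_ }
  intro N hN
  rcases eq_or_ne N ⊥ with hbot | hbot
  · exact Or.inl hbot
  right
  haveI := hN
  -- a nontrivial element of N
  obtain ⟨g, hgN, hg1⟩ : ∃ g, g ∈ N ∧ g ≠ 1 := by
    by_contra hcon
    push_neg at hcon
    exact hbot ((Subgroup.eq_bot_iff_forall N).mpr hcon)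
  set σ : Equiv.Perm X := (g : ↥(FAlt X)).1 with hσdef
  have hσ1 : σ ≠ 1 := fun h => hg1 (Subtype.ext h)
  obtain ⟨p₀, hp⟩ : ∃ p₀, σ p₀ ≠ p₀ := by
    by_contra hcon
    push_neg at hcon
    exact hσ1 (Equiv.ext fun w => hcon w)
  set q : X := σ p₀ with hqdef
  have hqp : q ≠ p₀ := hp
  have hqsupp : σ q ≠ q := by
    intro h
    exact hp (σ.injective (h.trans hqdef))
  have hfin : {x | σ x ≠ x}.Finite := FAlt.supp_finite g.2
  set S0 : Finset X := hfin.toFinset with hS0def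
  have hmemS0 : ∀ w, w ∈ S0 ↔ σ w ≠ w := fun w => Set.Finite.mem_toFinset _
  obtain ⟨r, hr⟩ := Infinite.exists_notMem_finset S0
  obtain ⟨s, hs⟩ := Infinite.exists_notMem_finset (insert r S0)
  obtain ⟨t, ht⟩ := Infinite.exists_notMem_finset (insert s (insert r S0))
  simp only [Finset.mem_insert, not_or] at hs ht
  have hσr : σ r = r := by by_contra h; exact hr ((hmemS0 r).mpr h)
  have hσs : σ s = s := by by_contra h; exact hs.2 ((hmemS0 s).mpr h)
  have hp₀S0 : p₀ ∈ S0 := (hmemS0 p₀).mpr hp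
  have hqS0 : q ∈ S0 := (hmemS0 q).mpr hqsupp
  have hpr : p₀ ≠ r := fun h => hr (h ▸ hp₀S0)
  have hps : p₀ ≠ s := fun h => hs.2 (h ▸ hp₀S0)
  have hpt : p₀ ≠ t := fun h => ht.2.2 (h ▸ hp₀S0)
  have hqr : q ≠ r := fun h => hr (h ▸ hqS0)
  have hqs : q ≠ s := fun h => hs.2 (h ▸ hqS0)
  have hqt : q ≠ t := fun h => ht.2.2 (h ▸ hqS0)
  have hrs : r ≠ s := fun h => hs.1 h.symm
  have hrt : r ≠ t := fun h => ht.2.1 h.symm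
  have hst : s ≠ t := fun h => ht.1 h.symm
  have hpq : p₀ ≠ q := Ne.symm hqp
  -- the 3-cycle τ = (p₀ r s) and the commutator π
  set τ : Equiv.Perm X := c3 p₀ r s with hτdef
  have hτmem : τ ∈ FAlt X := c3_mem_FAlt hpr hps hrs
  set tF : ↥(FAlt X) := ⟨τ, hτmem⟩ with htFdef
  set πe : ↥(FAlt X) := g * tF * g⁻¹ * tF⁻¹ with hπedef
  have hπN : πe ∈ N := by
    have h1 : tF * g⁻¹ * tF⁻¹ ∈ N := hN.conj_mem _ (inv_mem hgN) tF
    have h2 : πe = g * (tF * g⁻¹ * tF⁻¹) := by rw [hπedef]; group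
    rw [h2]
    exact mul_mem hgN h1
  have hπval : (πe : Equiv.Perm X) = σ * τ * σ⁻¹ * τ⁻¹ := rfl
  have hconj : σ * τ * σ⁻¹ = c3 q r s := by
    have h1 : σ * Equiv.swap p₀ s * σ⁻¹ = Equiv.swap q s := by
      rw [← Equiv.swap_apply_apply σ p₀ s, hσs, ← hqdef]
    have h2 : σ * Equiv.swap p₀ r * σ⁻¹ = Equiv.swap q r := by
      rw [← Equiv.swap_apply_apply σ p₀ r, hσr, ← hqdef]
    calc σ * τ * σ⁻¹
        = (σ * Equiv.swap p₀ s * σ⁻¹) * (σ * Equiv.swap p₀ r * σ⁻¹) := by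
          rw [hτdef]; show _ = _; rw [c3]; group
      _ = Equiv.swap q s * Equiv.swap q r := by rw [h1, h2]
      _ = c3 q r s := rfl
  have hπeq : (πe : Equiv.Perm X) =
      Equiv.swap q s * Equiv.swap q r * Equiv.swap p₀ r * Equiv.swap p₀ s := by
    rw [hπval, hconj, hτdef]
    show c3 q r s * (c3 p₀ r s)⁻¹ = _
    rw [c3, c3, mul_inv_rev, Equiv.swap_inv, Equiv.swap_inv]
    group
  have hπr : (πe : Equiv.Perm X) r = p₀ := by
    rw [hπeq]
    simp only [Equiv.Perm.mul_apply]
    rw [Equiv.swap_apply_of_ne_of_ne (Ne.symm hpr) hrs,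
      Equiv.swap_apply_right,
      Equiv.swap_apply_of_ne_of_ne hpq hpr,
      Equiv.swap_apply_of_ne_of_ne hpq hps]
  have hπ1 : πe ≠ 1 := by
    intro h
    rw [h] at hπr
    simp only [OneMemClass.coe_one, Equiv.Perm.one_apply] at hπr
    exact hpr hπr.symm
  -- the 5-element finset T
  set T : Finset X := {p₀, q, r, s, t} with hTdef
  have hTcard : T.card = 5 := by
    rw [hTdef,
      Finset.card_insert_of_notMem (by simp [hpq, hpr, hps, hpt]),
      Finset.card_insert_of_notMem (by simp [hqr, hqs, hqt]),
      Finset.card_insert_of_notMem (by simp [hrs, hrt]),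
      Finset.card_insert_of_notMem (by simp [hst]),
      Finset.card_singleton]
  have hcard5 : Fintype.card {u // u ∈ T} = 5 := by rw [Fintype.card_coe, hTcard]
  haveI := alt_simple_of_card_five hcard5
  have hpT : p₀ ∈ T := by simp [hTdef]
  have hqT : q ∈ T := by simp [hTdef]
  have hrT : r ∈ T := by simp [hTdef]
  have hsT : s ∈ T := by simp [hTdef]
  set pp : {u // u ∈ T} := ⟨p₀, hpT⟩
  set qq : {u // u ∈ T} := ⟨q, hqT⟩
  set rr : {u // u ∈ T} := ⟨r, hrT⟩
  set ss : {u // u ∈ T} := ⟨s, hsT⟩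
  have hqqss : qq ≠ ss := fun h => hqs (congrArg Subtype.val h)
  have hqqrr : qq ≠ rr := fun h => hqr (congrArg Subtype.val h)
  have hpprr : pp ≠ rr := fun h => hpr (congrArg Subtype.val h)
  have hppss : pp ≠ ss := fun h => hps (congrArg Subtype.val h)
  set ε : Equiv.Perm {u // u ∈ T} :=
    Equiv.swap qq ss * Equiv.swap qq rr * Equiv.swap pp rr * Equiv.swap pp ss with hεdef
  have hofε : Equiv.Perm.ofSubtype ε = (πe : Equiv.Perm X) := by
    rw [hεdef, hπeq]
    rw [map_mul, map_mul, map_mul]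
    rw [Equiv.Perm.ofSubtype_swap_eq, Equiv.Perm.ofSubtype_swap_eq,
      Equiv.Perm.ofSubtype_swap_eq, Equiv.Perm.ofSubtype_swap_eq]
  have hεalt : ε ∈ alternatingGroup {u // u ∈ T} := by
    rw [Equiv.Perm.mem_alternatingGroup, hεdef]
    rw [map_mul, map_mul, map_mul]
    rw [Equiv.Perm.sign_swap hqqss, Equiv.Perm.sign_swap hqqrr,
      Equiv.Perm.sign_swap hpprr, Equiv.Perm.sign_swap hppss]
    norm_num
  -- K = preimage of N in the alternating group on T is all of it
  set K : Subgroup (alternatingGroup {u // u ∈ T}) := N.comap (altToFAlt T) with hKdef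
  haveI hKnormal : K.Normal := hN.comap _
  have hεK : (⟨ε, hεalt⟩ : alternatingGroup {u // u ∈ T}) ∈ K := by
    rw [hKdef, Subgroup.mem_comap]
    have : altToFAlt T ⟨ε, hεalt⟩ = πe := Subtype.ext hofε
    rw [this]
    exact hπN
  have hKne : K ≠ ⊥ := by
    intro h
    rw [h, Subgroup.mem_bot] at hεK
    have hε1 : ε = 1 := congrArg Subtype.val hεK
    apply hπ1
    refine Subtype.ext ?_
    rw [← hofε, hε1, map_one]
    simp
  have hKtop : K = ⊤ := hKnormal.eq_bot_or_eq_top.resolve_left hKne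
  -- hence the 3-cycle τ = (p₀ r s) gives an element of N
  set ετ : Equiv.Perm {u // u ∈ T} := Equiv.swap pp ss * Equiv.swap pp rr with hετdef
  have hofτ : Equiv.Perm.ofSubtype ετ = τ := by
    rw [hετdef, map_mul, Equiv.Perm.ofSubtype_swap_eq, Equiv.Perm.ofSubtype_swap_eq]
    rfl
  have hετalt : ετ ∈ alternatingGroup {u // u ∈ T} := by
    rw [Equiv.Perm.mem_alternatingGroup, hετdef, map_mul,
      Equiv.Perm.sign_swap hppss, Equiv.Perm.sign_swap hpprr]
    norm_num
  have hτN : (⟨τ, hτmem⟩ : ↥(FAlt X)) ∈ N := by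
    have h1 : (⟨ετ, hετalt⟩ : alternatingGroup {u // u ∈ T}) ∈ K := by
      rw [hKtop]; exact Subgroup.mem_top _
    rw [hKdef, Subgroup.mem_comap] at h1
    have h2 : altToFAlt T ⟨ετ, hετalt⟩ = ⟨τ, hτmem⟩ := Subtype.ext hofτ
    rwa [h2] at h1
  have hτ3 : {x | τ x ≠ x}.ncard = 3 := by rw [hτdef]; exact c3_ncard hpr hps hrs
  -- every 3-cycle of X lies in N
  have key : ∀ c : Equiv.Perm X, {x | c x ≠ x}.ncard = 3 →
      ∀ hcF : c ∈ FAlt X, (⟨c, hcF⟩ : ↥(FAlt X)) ∈ N := by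
    intro c hc hcF
    have hcfin : {x | c x ≠ x}.Finite := Set.finite_of_ncard_ne_zero (by rw [hc]; norm_num)
    set S : Finset X := ({p₀, r, s} : Finset X) ∪ hcfin.toFinset with hSdef
    obtain ⟨T', hsub', hcard'⟩ := Infinite.exists_superset_card_eq S (S.card + 5) (by omega)
    have h5 : 5 ≤ Fintype.card {u // u ∈ T'} := by rw [Fintype.card_coe, hcard']; omega
    have hτsupp : {x | τ x ≠ x} ⊆ ↑T' := by
      rw [hτdef, c3_supp hpr hps hrs]
      intro w hw
      apply hsub'
      rw [hSdef]
      apply Finset.mem_union_left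
      simpa using hw
    obtain ⟨ε₃, hε₃3, hε₃eq⟩ := exists_restrict_threeCycle τ hτ3 T' hτsupp
    set K' : Subgroup (alternatingGroup {u // u ∈ T'}) := N.comap (altToFAlt T') with hK'def
    haveI : K'.Normal := hN.comap _
    have hmemK' : (⟨ε₃, hε₃3.mem_alternatingGroup⟩ : alternatingGroup {u // u ∈ T'}) ∈ K' := by
      rw [hK'def, Subgroup.mem_comap]
      have h2 : altToFAlt T' ⟨ε₃, hε₃3.mem_alternatingGroup⟩ = ⟨τ, hτmem⟩ :=
        Subtype.ext hε₃eq
      rw [h2]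
      exact hτN
    have hK'top : K' = ⊤ := by
      rw [eq_top_iff, ← hε₃3.alternating_normalClosure (by rw [Nat.card_eq_fintype_card]; exact h5)]
      exact Subgroup.normalClosure_le_normal (Set.singleton_subset_iff.mpr hmemK')
    have hcsupp : {x | c x ≠ x} ⊆ ↑T' := fun w hw =>
      hsub' (Finset.mem_union_right _ (hcfin.mem_toFinset.mpr hw))
    obtain ⟨εc, hεc3, hεceq⟩ := exists_restrict_threeCycle c hc T' hcsupp
    have h1 : (⟨εc, hεc3.mem_alternatingGroup⟩ : alternatingGroup {u // u ∈ T'}) ∈ K' := by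
      rw [hK'top]; exact Subgroup.mem_top _
    rw [hK'def, Subgroup.mem_comap] at h1
    have h2 : altToFAlt T' ⟨εc, hεc3.mem_alternatingGroup⟩ = ⟨c, hcF⟩ := Subtype.ext hεceq
    rwa [h2] at h1
  -- conclude N = ⊤
  rw [eq_top_iff]
  intro u _
  have hu2 : (u : Equiv.Perm X) ∈
      Subgroup.closure {σ : Equiv.Perm X | {x | σ x ≠ x}.ncard = 3} := u.2
  have := Subgroup.closure_induction
    (p := fun v hv => (⟨v, hv⟩ : ↥(FAlt X)) ∈ N)
    (fun v hv => key v hv (Subgroup.subset_closure hv))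
    (N.one_mem)
    (fun v w hv hw ihv ihw => N.mul_mem ihv ihw)
    (fun v hv ihv => N.inv_mem ihv)
    hu2
  exact this
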